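/- Let f : ℝⁿ × ℝᵐ → ℝ be twice continuously differentiable with ∇f Lipschitz with constant L, and let 0 < α < 1/L. Let (x*,y*) be a local min-max critical point of f such that the matrix H(x*,y*) has only real eigenvalues. Then the spectral radius of the Jacobian I + αH(x*,y*) of the GDA map at (x*,y*) is at most 1, i.e., (x*,y*) is GDA-stable. -/

import Mathlib

open Filter Topology MeasureTheory Matrix

noncomputable section

abbrev Euc (n : ℕ) : Type := EuclideanSpace ℝ (Fin n)

/-- Partial gradient of `f` with respect to the first (`x`) variable. -/
noncomputable def gradX {n m : ℕ} (f : Euc n × Euc m → ℝ) (p : Euc n × Euc m) : Euc n :=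
  gradient (fun x => f (x, p.2)) p.1

/-- Partial gradient of `f` with respect to the second (`y`) variable. -/
noncomputable def gradY {n m : ℕ} (f : Euc n × Euc m → ℝ) (p : Euc n × Euc m) : Euc m :=
  gradient (fun y => f (p.1, y)) p.2

/-- The GDA (gradient descent/ascent) update map with step size `α`:
`h(x,y) = (x - α ∇ₓ f(x,y), y + α ∇ᵧ f(x,y))`. -/
noncomputable def gda {n m : ℕ} (f : Euc n × Euc m → ℝ) (α : ℝ) (p : Euc n × Euc m) :
    Euc n × Euc m :=
  (p.1 - α • gradX f p, p.2 + α • gradY f p)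

/-- The standard basis vectors of `ℝⁿ × ℝᵐ`. -/
noncomputable def bVec (n m : ℕ) : Fin n ⊕ Fin m → Euc n × Euc m
  | Sum.inl i => (EuclideanSpace.single i 1, 0)
  | Sum.inr j => (0, EuclideanSpace.single j 1)

/-- Second directional derivative of `f` at `p` in directions `u, v`. -/
noncomputable def dD {n m : ℕ} (f : Euc n × Euc m → ℝ) (p u v : Euc n × Euc m) : ℝ :=
  fderiv ℝ (fun q => fderiv ℝ f q v) p u

/-- The matrix `H = [[-∇²ₓₓ f, -∇²ₓᵧ f], [∇²ᵧₓ f, ∇²ᵧᵧ f]]` of `f` at `p`. -/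
noncomputable def Hmat {n m : ℕ} (f : Euc n × Euc m → ℝ) (p : Euc n × Euc m) :
    Matrix (Fin n ⊕ Fin m) (Fin n ⊕ Fin m) ℝ :=
  Matrix.of fun i j =>
    (Sum.elim (fun _ => (-1 : ℝ)) (fun _ => (1 : ℝ)) i) * dD f p (bVec n m i) (bVec n m j)

/-- The set of complex eigenvalues of a real square matrix. -/
noncomputable def specC {ι : Type} [Fintype ι] [DecidableEq ι] (M : Matrix ι ι ℝ) : Set ℂ :=
  spectrum ℂ (M.map (Complex.ofReal))

/-- The Jacobian `I + αH` of the GDA update map at `p`. -/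
noncomputable def Jgda {n m : ℕ} (f : Euc n × Euc m → ℝ) (α : ℝ) (p : Euc n × Euc m) :
    Matrix (Fin n ⊕ Fin m) (Fin n ⊕ Fin m) ℝ :=
  1 + α • Hmat f p

/-- `(x*,y*)` is a local min-max point of `f`: there is a neighborhood `U` of `(x*,y*)`
such that `f(x*,y) ≤ f(x*,y*) ≤ f(x,y*)` for all `(x,y) ∈ U`. -/
def IsLocalMinMax {n m : ℕ} (f : Euc n × Euc m → ℝ) (p : Euc n × Euc m) : Prop :=
  ∃ U ∈ 𝓝 p, ∀ q ∈ U, f (p.1, q.2) ≤ f p ∧ f p ≤ f (q.1, p.2)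

/-! ### Auxiliary lemmas -/

open Set in
/-- One-dimensional second-derivative necessity at a local minimum. -/
lemma sec_deriv_nonneg (φ ψ : ℝ → ℝ) (c : ℝ)
    (hφ : ∀ t, HasDerivAt φ (ψ t) t) (hψ0 : ψ 0 = 0)
    (hψ : HasDerivAt ψ c 0) (hmin : ∀ᶠ t in 𝓝 (0:ℝ), φ 0 ≤ φ t) : 0 ≤ c := by
  by_contra hc
  push_neg at hc
  have hslope := hasDerivAt_iff_tendsto_slope.mp hψ
  have h1 : ∀ᶠ t in 𝓝[≠] (0:ℝ), slope ψ 0 t < 0 :=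
    hslope.eventually (Iio_mem_nhds hc)
  have h2 : ∀ᶠ t in 𝓝[>] (0:ℝ), ψ t < 0 := by
    have h3 : ∀ᶠ t in 𝓝[>] (0:ℝ), slope ψ 0 t < 0 :=
      nhdsWithin_mono 0 (fun t ht => Set.mem_compl_singleton_iff.mpr (ne_of_gt ht)) h1
    filter_upwards [h3, self_mem_nhdsWithin] with t ht ht'
    have : (ψ t - ψ 0) / (t - 0) < 0 := by rwa [slope_def_field] at ht
    rw [hψ0, sub_zero, sub_zero] at this
    have htpos : (0:ℝ) < t := ht'
    rcases div_neg_iff.mp this with ⟨_, h⟩ | ⟨h, _⟩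
    · linarith
    · exact h
  obtain ⟨u, hu, hIoo⟩ := mem_nhdsGT_iff_exists_Ioo_subset.mp h2
  obtain ⟨δ, hδpos, hδ⟩ := Metric.eventually_nhds_iff.mp hmin
  set e := min (u/2) (δ/2) with he
  have he0 : 0 < e := lt_min (by simpa using hu) (by linarith)
  have heu : e < u := lt_of_le_of_lt (min_le_left _ _) (by simpa using hu)
  have heδ : e < δ := lt_of_le_of_lt (min_le_right _ _) (by linarith)
  have hanti : StrictAntiOn φ (Icc 0 e) := by
    apply strictAntiOn_of_deriv_neg (convex_Icc 0 e)
    · exact fun t _ => (hφ t).differentiableAt.continuousAt.continuousWithinAt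
    · intro t ht
      rw [interior_Icc] at ht
      rw [(hφ t).deriv]
      exact hIoo ⟨ht.1, lt_trans ht.2 heu⟩
  have h4 : φ e < φ 0 := hanti (left_mem_Icc.mpr he0.le) (right_mem_Icc.mpr he0.le) he0
  have h5 : φ 0 ≤ φ e := hδ (by simpa [abs_of_pos he0] using heδ)
  linarith

lemma arith_key {x y t u S L r : ℝ} (hS : 0 < S) (hsum : x^2 + y^2 = r^2 * S)
    (hx : x ≤ t) (hy : y ≤ t) (ht : t ≤ L * u) (hu : u^2 ≤ S)
    (hx0 : 0 ≤ x) (hy0 : 0 ≤ y) (hL : 0 ≤ L) : r^2 ≤ 2 * L^2 := by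
  have ht0 : 0 ≤ t := le_trans hx0 hx
  have h1 : x^2 ≤ t^2 := pow_le_pow_left₀ hx0 hx 2
  have h2 : y^2 ≤ t^2 := pow_le_pow_left₀ hy0 hy 2
  have h3 : t^2 ≤ (L*u)^2 := pow_le_pow_left₀ ht0 ht 2
  have h4 : (L*u)^2 = L^2 * u^2 := by ring
  have h5 : L^2*u^2 ≤ L^2*S := mul_le_mul_of_nonneg_left hu (by positivity)
  have h6 : r^2 * S ≤ (2*L^2) * S := by linarith
  exact le_of_mul_le_mul_right h6 hS

section SpecAux
variable {ι : Type} [Fintype ι] [DecidableEq ι]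

lemma spec_shift {M : Matrix ι ι ℝ} {α : ℝ} (hα : α ≠ 0) {μ : ℂ}
    (h : μ ∈ spectrum ℂ ((1 + α • M).map Complex.ofReal)) :
    ((μ - 1)/α : ℂ) ∈ spectrum ℂ (M.map Complex.ofReal) := by
  rw [spectrum.mem_iff] at h ⊢
  intro hu
  apply h
  have hmap : (1 + α • M).map Complex.ofReal
      = 1 + (α : ℂ) • (M.map Complex.ofReal) := by
    ext i j
    simp [Matrix.map_apply, Matrix.one_apply, apply_ite Complex.ofReal]
  have hαC : (α : ℂ) ≠ 0 := by exact_mod_cast hα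
  have key : algebraMap ℂ (Matrix ι ι ℂ) μ - (1 + α • M).map Complex.ofReal
      = (α : ℂ) • (algebraMap ℂ (Matrix ι ι ℂ) ((μ - 1)/α) - M.map Complex.ofReal) := by
    rw [hmap, Algebra.algebraMap_eq_smul_one, Algebra.algebraMap_eq_smul_one,
      smul_sub, smul_smul, mul_div_cancel₀ _ hαC]
    module
  rw [key]
  rw [Matrix.isUnit_iff_isUnit_det] at hu ⊢
  rw [Matrix.det_smul, isUnit_iff_ne_zero]
  rw [isUnit_iff_ne_zero] at hu
  exact mul_ne_zero (pow_ne_zero _ hαC) hu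

lemma spec_real_det {M : Matrix ι ι ℝ} {lam : ℂ} (him : lam.im = 0)
    (h : lam ∈ spectrum ℂ (M.map Complex.ofReal)) :
    ((lam.re • (1 : Matrix ι ι ℝ)) - M).det = 0 := by
  rw [spectrum.mem_iff] at h
  have hmap : algebraMap ℂ (Matrix ι ι ℂ) lam - M.map Complex.ofReal
      = ((lam.re • (1 : Matrix ι ι ℝ)) - M).map Complex.ofReal := by
    have hlam : ((lam.re : ℂ)) = lam := by apply Complex.ext <;> simp [him]
    ext i j
    rw [Algebra.algebraMap_eq_smul_one]
    simp [Matrix.map_apply, Matrix.sub_apply, Matrix.smul_apply, Matrix.one_apply,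
      Complex.ofReal_sub, Complex.ofReal_mul, apply_ite Complex.ofReal, hlam, smul_eq_mul]
  rw [hmap, Matrix.isUnit_iff_isUnit_det, isUnit_iff_ne_zero, not_not] at h
  have h2 : ((lam.re • (1:Matrix ι ι ℝ)) - M).map Complex.ofReal
      = Complex.ofRealHom.mapMatrix ((lam.re • (1:Matrix ι ι ℝ)) - M) := rfl
  rw [h2, ← RingHom.map_det] at h
  exact Complex.ofReal_eq_zero.mp h

end SpecAux

section AnalysisAux
variable {n m : ℕ}

/-- The pairing on the product space (which carries the sup norm, hence is not itself
an inner product space). -/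
noncomputable def pairP {n m : ℕ} (z w : Euc n × Euc m) : ℝ :=
  inner ℝ z.1 w.1 + inner ℝ z.2 w.2

/-- The pairing with a fixed vector, as a continuous linear map. -/
noncomputable def pairL {n m : ℕ} (z : Euc n × Euc m) : (Euc n × Euc m) →L[ℝ] ℝ :=
  (innerSL ℝ z.1).comp (ContinuousLinearMap.fst ℝ _ _)
    + (innerSL ℝ z.2).comp (ContinuousLinearMap.snd ℝ _ _)

lemma pairL_apply (z w : Euc n × Euc m) : pairL z w = pairP z w := rfl

lemma pairP_comm (z w : Euc n × Euc m) : pairP z w = pairP w z := by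
  simp [pairP, PiLp.inner_apply, RCLike.inner_apply, conj_trivial, mul_comm]

lemma fderiv_eq_pair (f : Euc n × Euc m → ℝ) (hf : Differentiable ℝ f) (q : Euc n × Euc m)
    (v : Euc n × Euc m) :
    fderiv ℝ f q v = pairP (gradX f q, gradY f q) v := by
  have h1 : HasFDerivAt (fun x => f (x, q.2))
      ((fderiv ℝ f q).comp (ContinuousLinearMap.inl ℝ _ _)) q.1 :=
    ((hf q).hasFDerivAt.comp q.1 (hasFDerivAt_prodMk_left q.1 q.2) : _)
  have h2 : HasFDerivAt (fun y => f (q.1, y))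
      ((fderiv ℝ f q).comp (ContinuousLinearMap.inr ℝ _ _)) q.2 :=
    ((hf q).hasFDerivAt.comp q.2 (hasFDerivAt_prodMk_right q.1 q.2) : _)
  have e1 : (inner ℝ (gradX f q) v.1 : ℝ) = fderiv ℝ f q (v.1, 0) := by
    rw [gradX, gradient, InnerProductSpace.toDual_symm_apply, h1.fderiv]
    rfl
  have e2 : (inner ℝ (gradY f q) v.2 : ℝ) = fderiv ℝ f q (0, v.2) := by
    rw [gradY, gradient, InnerProductSpace.toDual_symm_apply, h2.fderiv]
    rfl
  rw [pairP, e1, e2, ← map_add]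
  norm_num

lemma gradX_eq (f : Euc n × Euc m → ℝ) (hf : Differentiable ℝ f) (q : Euc n × Euc m) :
    gradX f q = (InnerProductSpace.toDual ℝ (Euc n)).symm
      ((fderiv ℝ f q).comp (ContinuousLinearMap.inl ℝ _ _)) := by
  have h1 : HasFDerivAt (fun x => f (x, q.2))
      ((fderiv ℝ f q).comp (ContinuousLinearMap.inl ℝ _ _)) q.1 :=
    ((hf q).hasFDerivAt.comp q.1 (hasFDerivAt_prodMk_left q.1 q.2) : _)
  rw [gradX, gradient, h1.fderiv]

lemma gradY_eq (f : Euc n × Euc m → ℝ) (hf : Differentiable ℝ f) (q : Euc n × Euc m) :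
    gradY f q = (InnerProductSpace.toDual ℝ (Euc m)).symm
      ((fderiv ℝ f q).comp (ContinuousLinearMap.inr ℝ _ _)) := by
  have h2 : HasFDerivAt (fun y => f (q.1, y))
      ((fderiv ℝ f q).comp (ContinuousLinearMap.inr ℝ _ _)) q.2 :=
    ((hf q).hasFDerivAt.comp q.2 (hasFDerivAt_prodMk_right q.1 q.2) : _)
  rw [gradY, gradient, h2.fderiv]

lemma contDiff_grad_pair (f : Euc n × Euc m → ℝ) (hf : ContDiff ℝ 2 f) :
    ContDiff ℝ 1 (fun p => (gradX f p, gradY f p) : Euc n × Euc m → Euc n × Euc m) := by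
  have hd : Differentiable ℝ f := hf.differentiable two_ne_zero
  have hfd : ContDiff ℝ 1 (fderiv ℝ f) := hf.fderiv_right (by norm_num)
  have hx : ContDiff ℝ 1 (gradX f) := by
    have : gradX f = fun q => (InnerProductSpace.toDual ℝ (Euc n)).symm
        (((ContinuousLinearMap.compL ℝ (Euc n) (Euc n × Euc m) ℝ).flip
          (ContinuousLinearMap.inl ℝ _ _)) (fderiv ℝ f q)) :=
      funext fun q => gradX_eq f hd q
    rw [this]
    exact (InnerProductSpace.toDual ℝ (Euc n)).symm.contDiff.comp
      (((ContinuousLinearMap.compL ℝ (Euc n) (Euc n × Euc m) ℝ).flip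
        (ContinuousLinearMap.inl ℝ _ _)).contDiff.comp hfd)
  have hy : ContDiff ℝ 1 (gradY f) := by
    have : gradY f = fun q => (InnerProductSpace.toDual ℝ (Euc m)).symm
        (((ContinuousLinearMap.compL ℝ (Euc m) (Euc n × Euc m) ℝ).flip
          (ContinuousLinearMap.inr ℝ _ _)) (fderiv ℝ f q)) :=
      funext fun q => gradY_eq f hd q
    rw [this]
    exact (InnerProductSpace.toDual ℝ (Euc m)).symm.contDiff.comp
      (((ContinuousLinearMap.compL ℝ (Euc m) (Euc n × Euc m) ℝ).flip
        (ContinuousLinearMap.inr ℝ _ _)).contDiff.comp hfd)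
  exact hx.prodMk hy

end AnalysisAux

set_option maxHeartbeats 1000000 in
theorem localMinMax_gda_stable {n m : ℕ} (f : Euc n × Euc m → ℝ) (L α : ℝ)
    (hf : ContDiff ℝ 2 f)
    (hL : LipschitzWith (Real.toNNReal L) (fun p => (gradX f p, gradY f p)))
    (hα : 0 < α) (hα' : α < 1 / L)
    (pstar : Euc n × Euc m) (hcrit : fderiv ℝ f pstar = 0)
    (hmm : IsLocalMinMax f pstar)
    (hreal : ∀ μ ∈ specC (Hmat f pstar), μ.im = 0) :
    ∀ μ ∈ specC (Jgda f α pstar), ‖μ‖ ≤ 1 := by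
  intro μ hμ
  -- basic positivity facts
  have hL0 : 0 < L := by
    rcases lt_trichotomy L 0 with h | h | h
    · have : 1 / L < 0 := one_div_neg.mpr h
      linarith
    · rw [h] at hα'; simp at hα'; linarith
    · exact h
  have hαL : α * L < 1 := by
    rw [lt_div_iff₀ hL0] at hα'
    exact hα'
  -- differentiability setup
  have hdiff : Differentiable ℝ f := hf.differentiable two_ne_zero
  set G : Euc n × Euc m → Euc n × Euc m := fun p => (gradX f p, gradY f p) with hGdef
  have hGc : ContDiff ℝ 1 G := contDiff_grad_pair f hf
  have hGd : Differentiable ℝ G := hGc.differentiable one_ne_zero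
  set D : (Euc n × Euc m) →L[ℝ] (Euc n × Euc m) := fderiv ℝ G pstar with hDdef
  have hDG : HasFDerivAt G D pstar := (hGd pstar).hasFDerivAt
  have hfΦ : ∀ q v, fderiv ℝ f q v = pairP (G q) v := fun q v => fderiv_eq_pair f hdiff q v
  -- the second derivative as the pairing against `D`
  have hdd : ∀ u v, dD f pstar u v = pairP (D u) v := by
    intro u v
    have hfun : (fun q => fderiv ℝ f q v) = fun q => pairL v (G q) := by
      funext q
      rw [hfΦ q v, pairL_apply, pairP_comm]
    rw [dD, hfun]
    have : HasFDerivAt (fun q => pairL v (G q)) ((pairL v).comp D) pstar :=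
      (pairL v).hasFDerivAt.comp pstar hDG
    rw [this.fderiv]
    simp only [ContinuousLinearMap.coe_comp', Function.comp_apply]
    rw [pairL_apply, pairP_comm]
  -- symmetry of the second derivative
  have hfdd : HasFDerivAt (fderiv ℝ f) (fderiv ℝ (fderiv ℝ f) pstar) pstar := by
    have hfd : ContDiff ℝ 1 (fderiv ℝ f) := hf.fderiv_right (by norm_num)
    exact ((hfd.differentiable one_ne_zero) pstar).hasFDerivAt
  have hdd' : ∀ u v, dD f pstar u v = fderiv ℝ (fderiv ℝ f) pstar u v := by
    intro u v
    have hfun : (fun q => fderiv ℝ f q v)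
        = fun q => (ContinuousLinearMap.apply ℝ ℝ v) (fderiv ℝ f q) := rfl
    rw [dD, hfun]
    have : HasFDerivAt (fun q => (ContinuousLinearMap.apply ℝ ℝ v) (fderiv ℝ f q))
        ((ContinuousLinearMap.apply ℝ ℝ v).comp (fderiv ℝ (fderiv ℝ f) pstar)) pstar :=
      (ContinuousLinearMap.apply ℝ ℝ v).hasFDerivAt.comp pstar hfdd
    rw [this.fderiv]
    rfl
  have hsymf : IsSymmSndFDerivAt ℝ f pstar := hf.contDiffAt.isSymmSndFDerivAt (by simp)
  have hsym : ∀ u v, pairP (D u) v = pairP (D v) u := by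
    intro u v
    rw [← hdd, ← hdd, hdd' u v, hdd' v u]
    exact hsymf u v
  -- sign conditions from local min-max
  obtain ⟨U, hU, hUmm⟩ := hmm
  have hsign : ∀ z : Euc n × Euc m,
      (z.2 = 0 → 0 ≤ pairP (D z) z) ∧ (z.1 = 0 → pairP (D z) z ≤ 0) := by
    intro z
    set c : ℝ → Euc n × Euc m := fun t => pstar + t • z with hcdef
    have hcd : ∀ t, HasDerivAt c z t := by
      intro t
      have := ((hasDerivAt_id t).smul_const z).const_add pstar
      simpa [hcdef] using this
    set φ : ℝ → ℝ := fun t => f (c t) with hφdef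
    set ψ : ℝ → ℝ := fun t => pairL z (G (c t)) with hψdef
    have hφ' : ∀ t, HasDerivAt φ (ψ t) t := by
      intro t
      have h := (hdiff (c t)).hasFDerivAt.comp_hasDerivAt t (hcd t)
      have : fderiv ℝ f (c t) z = ψ t := by
        rw [hfΦ (c t) z, hψdef]
        simp only [pairL_apply]
        exact pairP_comm _ _
      rw [this] at h
      exact h
    have hψ0 : ψ 0 = 0 := by
      have : pairP (G (c 0)) z = fderiv ℝ f (c 0) z := (hfΦ (c 0) z).symm
      have hc0 : c 0 = pstar := by simp [hcdef]
      rw [hψdef]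
      simp only [pairL_apply]
      rw [pairP_comm, this, hc0, hcrit]
      simp
    have hψd : HasDerivAt ψ (pairP (D z) z) 0 := by
      have hc0 : c 0 = pstar := by simp [hcdef]
      have hG0 : HasFDerivAt G D (c 0) := by rw [hc0]; exact hDG
      have h1 : HasDerivAt (fun t => G (c t)) (D z) 0 := hG0.comp_hasDerivAt 0 (hcd 0)
      have h2 : HasDerivAt (fun t => pairL z (G (c t))) ((pairL z) (D z)) 0 :=
        (pairL z).hasFDerivAt.comp_hasDerivAt 0 h1
      have : (pairL z) (D z) = pairP (D z) z := by rw [pairL_apply]; exact pairP_comm _ _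
      rwa [this] at h2
    have hctend : Tendsto c (𝓝 0) (𝓝 pstar) := by
      have : Continuous c := by
        apply Continuous.add continuous_const
        exact continuous_id.smul continuous_const
      have h := this.tendsto 0
      simpa [hcdef] using h
    have hev : ∀ᶠ t in 𝓝 (0:ℝ), c t ∈ U := hctend.eventually_mem hU
    constructor
    · intro hz2
      apply sec_deriv_nonneg φ ψ _ hφ' hψ0 hψd
      filter_upwards [hev] with t ht
      have hkey := (hUmm (c t) ht).2
      have : ((c t).1, pstar.2) = c t := by
        apply Prod.ext
        · rfl
        · simp [hcdef, hz2]
      rw [this] at hkey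
      have hφ0 : φ 0 = f pstar := by simp [hφdef, hcdef]
      rw [hφ0]
      exact hkey
    · intro hz1
      have := sec_deriv_nonneg (fun t => -φ t) (fun t => -ψ t) (-(pairP (D z) z))
        (fun t => (hφ' t).neg) (by simp [hψ0]) hψd.neg ?_
      · linarith
      filter_upwards [hev] with t ht
      have hkey := (hUmm (c t) ht).1
      have : (pstar.1, (c t).2) = c t := by
        apply Prod.ext
        · simp [hcdef, hz1]
        · rfl
      rw [this] at hkey
      have hφ0 : φ 0 = f pstar := by simp [hφdef, hcdef]
      simp only [neg_le_neg_iff]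
      rw [hφ0]
      exact hkey
  -- norm bound on D
  have hDnorm : ‖D‖ ≤ L := by
    have h := norm_fderiv_le_of_lipschitz ℝ hL (x₀ := pstar)
    rwa [Real.coe_toNNReal L hL0.le] at h
  -- spectrum reduction
  have hμH : ((μ - 1)/α : ℂ) ∈ spectrum ℂ ((Hmat f pstar).map Complex.ofReal) :=
    spec_shift (ne_of_gt hα) hμ
  have him : ((μ - 1)/α : ℂ).im = 0 := hreal _ hμH
  set r : ℝ := ((μ - 1)/α : ℂ).re with hrdef
  have hdet : ((r • (1 : Matrix (Fin n ⊕ Fin m) (Fin n ⊕ Fin m) ℝ)) - Hmat f pstar).det = 0 :=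
    spec_real_det him hμH
  obtain ⟨ev, hev0, heveq⟩ := Matrix.exists_mulVec_eq_zero_iff.mpr hdet
  have heig : Hmat f pstar *ᵥ ev = r • ev := by
    rw [Matrix.sub_mulVec, Matrix.smul_mulVec, Matrix.one_mulVec, sub_eq_zero] at heveq
    exact heveq.symm
  -- the eigenvector as a vector in the product space
  set w1 : Euc n := (WithLp.equiv 2 (Fin n → ℝ)).symm (fun i => ev (Sum.inl i)) with hw1def
  set w2 : Euc m := (WithLp.equiv 2 (Fin m → ℝ)).symm (fun j => ev (Sum.inr j)) with hw2def
  set w : Euc n × Euc m := (w1, w2) with hwdef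
  have hw1 : ∀ i, w1 i = ev (Sum.inl i) := fun i => rfl
  have hw2 : ∀ j, w2 j = ev (Sum.inr j) := fun j => rfl
  -- coordinates via the pairing against basis vectors
  have hcoord : ∀ (z : Euc n × Euc m) (k : Fin n ⊕ Fin m),
      pairP z (bVec n m k) = Sum.elim (fun i => z.1 i) (fun j => z.2 j) k := by
    intro z k
    cases k with
    | inl i => simp [pairP, bVec, PiLp.inner_apply, RCLike.inner_apply, conj_trivial,
        EuclideanSpace.single_apply, mul_ite, Finset.sum_ite_eq]
    | inr j => simp [pairP, bVec, PiLp.inner_apply, RCLike.inner_apply, conj_trivial,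
        EuclideanSpace.single_apply, mul_ite, Finset.sum_ite_eq]
  -- pairing against w as a sum of coordinates
  have hinner1 : ∀ a : Euc n, (inner ℝ a w1 : ℝ) = ∑ i, a i * ev (Sum.inl i) := by
    intro a
    rw [PiLp.inner_apply]
    exact Finset.sum_congr rfl (fun i _ => by
      rw [hw1 i]; simp [RCLike.inner_apply, conj_trivial, mul_comm])
  have hinner2 : ∀ b : Euc m, (inner ℝ b w2 : ℝ) = ∑ j, b j * ev (Sum.inr j) := by
    intro b
    rw [PiLp.inner_apply]
    exact Finset.sum_congr rfl (fun j _ => by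
      rw [hw2 j]; simp [RCLike.inner_apply, conj_trivial, mul_comm])
  have hsum : ∀ z : Euc n × Euc m,
      ∑ k, pairP z (bVec n m k) * ev k = pairP z w := by
    intro z
    rw [Fintype.sum_sum_type]
    simp only [hcoord, Sum.elim_inl, Sum.elim_inr]
    rw [pairP, hinner1, hinner2]
  -- the eigen-equation in pairing form
  set eps : Fin n ⊕ Fin m → ℝ := Sum.elim (fun _ => (-1:ℝ)) (fun _ => (1:ℝ)) with hepsdef
  have heps2 : ∀ k, eps k * eps k = 1 := by intro k; cases k <;> simp [hepsdef]
  have heigk : ∀ k, pairP (D (bVec n m k)) w = eps k * (r * ev k) := by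
    intro k
    have h1 : (Hmat f pstar *ᵥ ev) k = r * ev k := by
      rw [heig]; simp
    have h2 : (Hmat f pstar *ᵥ ev) k = eps k * pairP (D (bVec n m k)) w := by
      rw [Matrix.mulVec, dotProduct]
      have : ∀ j, Hmat f pstar k j * ev j = eps k * (pairP (D (bVec n m k)) (bVec n m j) * ev j) := by
        intro j
        rw [Hmat, Matrix.of_apply, hdd]
        ring
      rw [Finset.sum_congr rfl (fun j _ => this j), ← Finset.mul_sum, hsum]
    have h3 := h1 ▸ h2.symm
    -- h3 : eps k * pairP (D (bVec n m k)) w = r * ev k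
    have := congrArg (fun x => eps k * x) h3
    simpa [← mul_assoc, heps2 k] using this
  have hDwk : ∀ k, pairP (D w) (bVec n m k) = eps k * (r * ev k) := by
    intro k
    rw [hsym w (bVec n m k)]
    exact heigk k
  -- block vectors
  set wx : Euc n × Euc m := (w1, 0) with hwxdef
  set wy : Euc n × Euc m := (0, w2) with hwydef
  set Sx : ℝ := ∑ i, ev (Sum.inl i) ^ 2 with hSxdef
  set Sy : ℝ := ∑ j, ev (Sum.inr j) ^ 2 with hSydef
  set S : ℝ := Sx + Sy with hSdef
  have hSsum : S = ∑ k, ev k ^ 2 := by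
    rw [hSdef, hSxdef, hSydef, Fintype.sum_sum_type]
  have hSpos : 0 < S := by
    rw [hSsum]
    have : ∃ k, ev k ≠ 0 := by
      by_contra hcon
      push_neg at hcon
      exact hev0 (funext hcon)
    obtain ⟨k, hk⟩ := this
    exact Finset.sum_pos' (fun _ _ => sq_nonneg _) ⟨k, Finset.mem_univ k, by positivity⟩
  -- split of pairing with w
  have hsplit : ∀ z : Euc n × Euc m, pairP z w = pairP z wx + pairP z wy := by
    intro z
    simp [pairP, hwdef, hwxdef, hwydef]
  -- pairing of D w against the blocks
  have hDwx : pairP (D w) wx = -(r * Sx) := by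
    have h1 : pairP (D w) wx = ∑ i, (D w).1 i * ev (Sum.inl i) := by
      rw [hwxdef, pairP]
      simp only [inner_zero_right, add_zero]
      exact hinner1 _
    rw [h1]
    have h2 : ∀ i, (D w).1 i * ev (Sum.inl i) = -(r * ev (Sum.inl i) ^ 2) := by
      intro i
      have h3 := hDwk (Sum.inl i)
      rw [hcoord (D w) (Sum.inl i)] at h3
      simp only [Sum.elim_inl, hepsdef] at h3
      rw [h3]
      ring
    rw [Finset.sum_congr rfl (fun i _ => h2 i), hSxdef, Finset.mul_sum]
    simp
  have hDwy : pairP (D w) wy = r * Sy := by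
    have h1 : pairP (D w) wy = ∑ j, (D w).2 j * ev (Sum.inr j) := by
      rw [hwydef, pairP]
      simp only [inner_zero_right, zero_add]
      exact hinner2 _
    rw [h1]
    have h2 : ∀ j, (D w).2 j * ev (Sum.inr j) = r * ev (Sum.inr j) ^ 2 := by
      intro j
      have h3 := hDwk (Sum.inr j)
      rw [hcoord (D w) (Sum.inr j)] at h3
      simp only [Sum.elim_inr, hepsdef] at h3
      rw [h3]
      ring
    rw [Finset.sum_congr rfl (fun j _ => h2 j), hSydef, Finset.mul_sum]
  -- sign facts for the blocks
  have ha : 0 ≤ pairP (D wx) wx := (hsign wx).1 rfl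
  have hb : pairP (D wy) wy ≤ 0 := (hsign wy).2 rfl
  have hc : pairP (D wx) wy = pairP (D wy) wx := hsym wx wy
  have hEq1 : pairP (D wx) wx + pairP (D wx) wy = -(r * Sx) := by
    rw [← hsplit (D wx), hsym wx w]
    exact hDwx
  have hEq2 : pairP (D wy) wx + pairP (D wy) wy = r * Sy := by
    rw [← hsplit (D wy), hsym wy w]
    exact hDwy
  have hr0 : r ≤ 0 := by
    have hrS : r * S ≤ 0 := by
      have hmul : r * S = r * Sx + r * Sy := by rw [hSdef]; ring
      rw [hmul]
      linarith
    by_contra hcon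
    push_neg at hcon
    have : 0 < r * S := mul_pos hcon hSpos
    linarith
  -- Parseval-type identity and norm bound
  have hpar : ∑ k, (pairP (D w) (bVec n m k))^2 = ‖(D w).1‖^2 + ‖(D w).2‖^2 := by
    rw [Fintype.sum_sum_type]
    simp only [hcoord, Sum.elim_inl, Sum.elim_inr]
    rw [← real_inner_self_eq_norm_sq, ← real_inner_self_eq_norm_sq,
      PiLp.inner_apply, PiLp.inner_apply]
    simp [RCLike.inner_apply, conj_trivial, sq]
  have hsum2 : ∑ k, (pairP (D w) (bVec n m k))^2 = r^2 * S := by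
    have h2 : ∀ k, (pairP (D w) (bVec n m k))^2 = r^2 * ev k ^2 := by
      intro k
      rw [hDwk k]
      cases k <;> simp [hepsdef] <;> ring
    rw [Finset.sum_congr rfl (fun k _ => h2 k), ← Finset.mul_sum, hSsum]
  have hw1n : ‖w1‖^2 = Sx := by
    rw [← real_inner_self_eq_norm_sq, hinner1 w1, hSxdef]
    exact Finset.sum_congr rfl (fun i _ => by rw [hw1 i, sq])
  have hw2n : ‖w2‖^2 = Sy := by
    rw [← real_inner_self_eq_norm_sq, hinner2 w2, hSydef]
    exact Finset.sum_congr rfl (fun j _ => by rw [hw2 j, sq])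
  have hwn : ‖w‖^2 ≤ S := by
    have h1 : ‖w‖ = max ‖w1‖ ‖w2‖ := Prod.norm_def w
    have hSx0 : 0 ≤ Sx := by rw [← hw1n]; positivity
    have hSy0 : 0 ≤ Sy := by rw [← hw2n]; positivity
    rcases max_choice ‖w1‖ ‖w2‖ with h | h
    · rw [h1, h, hw1n, hSdef]; linarith
    · rw [h1, h, hw2n, hSdef]; linarith
  have hDw : ‖D w‖ ≤ L * ‖w‖ :=
    le_trans (D.le_opNorm w) (mul_le_mul_of_nonneg_right hDnorm (norm_nonneg _))
  have hr2 : r^2 ≤ 2 * L^2 := by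
    have hps := hsum2
    rw [hpar] at hps
    exact arith_key hSpos hps (norm_fst_le (D w)) (norm_snd_le (D w)) hDw hwn
      (norm_nonneg _) (norm_nonneg _) hL0.le
  -- conclusion
  have hμeq : μ = ((1 + α * r : ℝ) : ℂ) := by
    have hlam : ((μ - 1)/α : ℂ) = (r : ℂ) := by
      apply Complex.ext
      · simp [hrdef]
      · simpa using him
    have hαC : (α:ℂ) ≠ 0 := by exact_mod_cast (ne_of_gt hα)
    have hmul : μ - 1 = (α:ℂ) * (r:ℂ) := by
      rw [← hlam]
      field_simp
    push_cast
    linear_combination hmul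
  rw [hμeq, Complex.norm_real, Real.norm_eq_abs]
  rw [abs_le]
  constructor
  · nlinarith [mul_pos hα hL0, sq_nonneg (α*r + 2), sq_nonneg (α*L), mul_pos hα hα,
      mul_nonneg (mul_nonneg hα.le hα.le) (sq_nonneg L)]
  · nlinarith [mul_nonneg hα.le (neg_nonneg.mpr hr0)]
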